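/- (Vinogradov's sublevel set lemma) Let h(t) = b₀ + b₁t + ⋯ + b_n tⁿ be a real polynomial of degree at most n, not identically zero, and let α > 0. Then the Lebesgue measure of the set E_α = {t ∈ [1,2] : |h(t)| ≤ α} satisfies |E_α| ≤ c (α / max_{0≤k≤n} |b_k|)^{1/n} for an absolute constant c > 0 (independent of n, h, α). -/

import Mathlib

open Real MeasureTheory Polynomial


lemma pts (E : Set ℝ) (hEc : IsClosed E) (hE2 : E ⊆ Set.Icc (1:ℝ) 2)
    (n : ℕ) (hn : 1 ≤ n) (hd : 0 < (volume E).toReal) :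
    ∃ x : ℕ → ℝ, (∀ j, j ≤ n → x j ∈ E) ∧
      ∀ i j, i ≤ j → j ≤ n → ((j:ℝ) - i) * ((volume E).toReal / n) ≤ x j - x i := by
  set d := (volume E).toReal with hdDef
  have hnR : (0:ℝ) < n := by exact_mod_cast hn
  have hfin : ∀ s : Set ℝ, volume (E ∩ s) ≠ ⊤ := by
    intro s
    refine ne_top_of_le_ne_top ?_ (measure_mono (Set.inter_subset_left.trans hE2))
    simp [Real.volume_Icc]
  have hEfin : volume E ≠ ⊤ := by
    simpa using hfin Set.univ
  have hne : E.Nonempty := by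
    rcases Set.eq_empty_or_nonempty E with hE | hE
    · simp [hE, hdDef] at hd
    · exact hE
  have hbdd : BddAbove E := (bddAbove_Icc (a:=(1:ℝ)) (b:=2)).mono hE2
  have hbddb : BddBelow E := (bddBelow_Icc : BddBelow (Set.Icc (1:ℝ) 2)).mono hE2
  set F : ℝ → ℝ := fun x => (volume (E ∩ Set.Iic x)).toReal with hF
  have hmono : Monotone F := by
    intro a b hab
    exact ENNReal.toReal_mono (hfin _) (measure_mono (Set.inter_subset_inter_right _ (Set.Iic_subset_Iic.2 hab)))
  have hlip : ∀ a b : ℝ, a ≤ b → F b ≤ F a + (b - a) := by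
    intro a b hab
    have hsub : E ∩ Set.Iic b ⊆ (E ∩ Set.Iic a) ∪ Set.Ioc a b := by
      intro t ht
      rcases le_or_gt t a with h | h
      · exact Or.inl ⟨ht.1, h⟩
      · exact Or.inr ⟨h, ht.2⟩
    calc F b ≤ ((volume (E ∩ Set.Iic a)) + volume (Set.Ioc a b)).toReal := by
          refine ENNReal.toReal_mono ?_ ((measure_mono hsub).trans (measure_union_le _ _))
          exact ENNReal.add_ne_top.2 ⟨hfin _, by simp⟩
      _ = F a + (b - a) := by
          rw [ENNReal.toReal_add (hfin _) (by simp), Real.volume_Ioc,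
            ENNReal.toReal_ofReal (by linarith)]
  have hcont : Continuous F := by
    apply LipschitzWith.continuous (K := 1)
    apply LipschitzWith.of_dist_le_mul
    intro a b
    rw [Real.dist_eq, Real.dist_eq]
    norm_num
    rw [abs_sub_le_iff]
    rcases le_total a b with hab | hab
    · have h1 := hlip a b hab
      have h2 := hmono hab
      have h3 : |a - b| = b - a := by rw [abs_sub_comm]; exact abs_of_nonneg (by linarith)
      constructor <;> linarith
    · have h1 := hlip b a hab
      have h2 := hmono hab
      have h3 : |a - b| = a - b := abs_of_nonneg (by linarith)
      constructor <;> linarith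
  set T : ℕ → Set ℝ := fun j => {x | x ∈ E ∧ (j:ℝ) * d / n ≤ F x} with hT
  have hTclosed : ∀ j, IsClosed (T j) := by
    intro j
    exact hEc.inter (isClosed_Ici.preimage hcont)
  have hTsub : ∀ j, T j ⊆ E := fun j x hx => hx.1
  have hTne : ∀ j, j ≤ n → (T j).Nonempty := by
    intro j hj
    refine ⟨sSup E, hEc.csSup_mem hne hbdd, ?_⟩
    have : E ∩ Set.Iic (sSup E) = E := by
      apply Set.inter_eq_self_of_subset_left
      intro e he; exact le_csSup hbdd he
    have hFe : F (sSup E) = d := by rw [hF]; simp only [this]; exact hdDef.symm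
    rw [hFe]
    rw [div_le_iff₀ hnR]
    calc (j:ℝ) * d ≤ n * d := by
          apply mul_le_mul_of_nonneg_right _ hd.le
          exact_mod_cast hj
      _ = d * n := mul_comm _ _
  set x : ℕ → ℝ := fun j => sInf (T j) with hx
  have hxmem : ∀ j, j ≤ n → x j ∈ T j := by
    intro j hj
    exact (hTclosed j).csInf_mem (hTne j hj) (hbddb.mono (hTsub j))
  have hxE : ∀ j, j ≤ n → x j ∈ E := fun j hj => (hxmem j hj).1
  have hFlower : ∀ j, j ≤ n → (j:ℝ) * d / n ≤ F (x j) := fun j hj => (hxmem j hj).2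
  have hFupper : ∀ i, i ≤ n → F (x i) ≤ (i:ℝ) * d / n := by
    intro i hi
    rcases Nat.eq_zero_or_pos i with h0 | hpos
    · subst h0
      have hsub : E ∩ Set.Iic (x 0) ⊆ {x 0} := by
        intro t ht
        have h1 : x 0 ≤ t := by
          apply csInf_le (hbddb.mono (hTsub 0))
          refine ⟨ht.1, ?_⟩
          simp only [Nat.cast_zero, zero_mul, zero_div]
          positivity
        exact Set.mem_singleton_iff.2 (le_antisymm ht.2 h1)
      have : F (x 0) ≤ (volume ({x 0} : Set ℝ)).toReal :=
        ENNReal.toReal_mono (by simp) (measure_mono hsub)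
      simpa using this
    · by_contra hcon
      push_neg at hcon
      set m := (i:ℝ) * d / n with hm
      have hmpos : 0 < m := by
        apply div_pos _ hnR
        exact mul_pos (by exact_mod_cast hpos) hd
      set ε := F (x i) - m with hε
      have hεpos : 0 < ε := by simp only [hε]; linarith
      set u := x i - ε / 2 with hu
      have hFu : m < F u := by
        have := hlip u (x i) (by simp only [hu]; linarith)
        have h2 : x i - u = ε / 2 := by simp only [hu]; ring
        rw [h2] at this
        simp only [hε] at *
        linarith
      have hApos : 0 < (volume (E ∩ Set.Iic u)).toReal := lt_trans hmpos hFu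
      have hAne : (E ∩ Set.Iic u).Nonempty := by
        rcases Set.eq_empty_or_nonempty (E ∩ Set.Iic u) with hA | hA
        · rw [hA] at hApos; simp at hApos
        · exact hA
      set z := sSup (E ∩ Set.Iic u) with hz
      have hzmem : z ∈ E ∩ Set.Iic u :=
        (hEc.inter isClosed_Iic).csSup_mem hAne (hbdd.mono Set.inter_subset_left)
      have hFz : F u ≤ F z := by
        apply ENNReal.toReal_mono (hfin _)
        apply measure_mono
        intro t ht
        exact ⟨ht.1, le_csSup (hbdd.mono Set.inter_subset_left) ht⟩
      have hzT : z ∈ T i := ⟨hzmem.1, le_of_lt (lt_of_lt_of_le hFu hFz)⟩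
      have : x i ≤ z := csInf_le (hbddb.mono (hTsub i)) hzT
      have : x i ≤ u := le_trans this hzmem.2
      simp only [hu] at this
      linarith
  refine ⟨x, hxE, ?_⟩
  intro i j hij hj
  have hxle : x i ≤ x j := by
    apply le_csInf (hTne j hj)
    intro b hb
    apply csInf_le (hbddb.mono (hTsub i))
    refine ⟨hb.1, le_trans ?_ hb.2⟩
    have : (i:ℝ) ≤ j := by exact_mod_cast hij
    gcongr
  have h1 : F (x j) - F (x i) ≤ x j - x i := by
    have := hlip (x i) (x j) hxle
    linarith
  have h2 : ((j:ℝ) - i) * (d / n) ≤ F (x j) - F (x i) := by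
    have ha := hFlower j hj
    have hb := hFupper i (le_trans hij hj)
    have : ((j:ℝ) - i) * (d / n) = (j:ℝ) * d / n - (i:ℝ) * d / n := by ring
    rw [this]
    linarith
  linarith


-- product of |j - i| over i in erase j (range (n+1))
lemma prodfact (n j : ℕ) (hj : j ≤ n) :
    ∏ i ∈ (Finset.range (n+1)).erase j, |(j:ℝ) - (i:ℝ)| = (Nat.factorial j : ℝ) * (Nat.factorial (n - j) : ℝ) := by
  have hsplit : (Finset.range (n+1)).erase j = Finset.range j ∪ Finset.Ico (j+1) (n+1) := by
    ext i
    simp only [Finset.mem_erase, Finset.mem_range, Finset.mem_union, Finset.mem_Ico]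
    omega
  have hdisj : Disjoint (Finset.range j) (Finset.Ico (j+1) (n+1)) := by
    rw [Finset.disjoint_left]
    intro a ha hb
    simp only [Finset.mem_range] at ha
    simp only [Finset.mem_Ico] at hb
    omega
  rw [hsplit, Finset.prod_union hdisj]
  have h1 : ∏ i ∈ Finset.range j, |(j:ℝ) - (i:ℝ)| = (Nat.factorial j : ℝ) := by
    have e1 : ∀ i ∈ Finset.range j, |(j:ℝ) - (i:ℝ)| = (((fun k => k + 1) (j - 1 - i) : ℕ) : ℝ) := by
      intro i hi
      simp only [Finset.mem_range] at hi
      show |(j:ℝ) - (i:ℝ)| = ((j - 1 - i + 1 : ℕ) : ℝ)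
      have e : (j - 1 - i) + 1 = j - i := by omega
      rw [e, Nat.cast_sub hi.le]
      exact abs_of_nonneg (by
        have : (i:ℝ) ≤ j := by exact_mod_cast hi.le
        linarith)
    rw [Finset.prod_congr rfl e1, ← Nat.cast_prod,
      Finset.prod_range_reflect (fun k => k + 1) j,
      Finset.prod_range_add_one_eq_factorial]
  have h2 : ∏ i ∈ Finset.Ico (j+1) (n+1), |(j:ℝ) - (i:ℝ)| = (Nat.factorial (n - j) : ℝ) := by
    rw [Finset.prod_Ico_eq_prod_range]
    have e2 : ∀ i ∈ Finset.range (n + 1 - (j + 1)), |(j:ℝ) - ((j + 1 + i : ℕ):ℝ)| = ((i + 1 : ℕ) : ℝ) := by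
      intro i _
      push_cast
      rw [abs_sub_comm]
      rw [abs_of_nonneg (by linarith)]
      ring
    rw [Finset.prod_congr rfl e2, ← Nat.cast_prod, Finset.prod_range_add_one_eq_factorial]
    congr 2
    omega
  rw [h1, h2]

-- esymm bound
lemma esymm_bound (t : Finset ℕ) (v : ℕ → ℝ) (hv : ∀ i ∈ t, |v i| ≤ 2) (m : ℕ) :
    |(t.1.map v).esymm m| ≤ (t.card.choose m : ℝ) * 2 ^ m := by
  rw [Finset.esymm_map_val]
  calc |∑ u ∈ t.powersetCard m, ∏ i ∈ u, v i| ≤ ∑ u ∈ t.powersetCard m, |∏ i ∈ u, v i| :=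
        Finset.abs_sum_le_sum_abs _ _
    _ ≤ ∑ u ∈ t.powersetCard m, (2:ℝ) ^ m := by
        apply Finset.sum_le_sum
        intro u hu
        rw [Finset.mem_powersetCard] at hu
        rw [Finset.abs_prod]
        calc ∏ i ∈ u, |v i| ≤ ∏ i ∈ u, (2:ℝ) := by
              apply Finset.prod_le_prod (fun i _ => abs_nonneg _)
              intro i hi
              exact hv i (hu.1 hi)
          _ = 2 ^ m := by rw [Finset.prod_const, hu.2]
    _ = (t.card.choose m : ℝ) * 2 ^ m := by
        rw [Finset.sum_const, Finset.card_powersetCard, nsmul_eq_mul]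

-- coeff bound for prod (X - C (v i))
lemma coeff_prod_bound (t : Finset ℕ) (v : ℕ → ℝ) (hv : ∀ i ∈ t, |v i| ≤ 2) (k : ℕ)
    (hk : k ≤ t.card) :
    |(∏ i ∈ t, (X - C (v i))).coeff k| ≤ (t.card.choose (t.card - k) : ℝ) * 2 ^ (t.card - k) := by
  have hp : ∏ i ∈ t, (X - C (v i)) = ((t.1.map v).map fun r => X - C r).prod := by
    rw [Multiset.map_map]
    rfl
  have hcard : Multiset.card (t.1.map v) = t.card := by simp
  rw [hp, Multiset.prod_X_sub_C_coeff _ (by rw [hcard]; exact hk), hcard]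
  rw [abs_mul, abs_pow, abs_neg, abs_one, one_pow, one_mul]
  exact esymm_bound t v hv _

-- choose le 2^n
lemma choose_le (n m : ℕ) : (n.choose m : ℝ) ≤ 2 ^ n := by
  have h : n.choose m ≤ 2 ^ n := by
    rcases le_or_gt m n with hm | hm
    · calc n.choose m ≤ ∑ i ∈ Finset.range (n+1), n.choose i :=
            Finset.single_le_sum (fun i _ => Nat.zero_le _)
              (Finset.mem_range.2 (Nat.lt_succ_of_le hm))
        _ = 2 ^ n := Nat.sum_range_choose n
    · rw [Nat.choose_eq_zero_of_lt hm]; exact Nat.zero_le _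
  exact_mod_cast h

-- n^n ≤ 3^n * n!
lemma pow_self_le (n : ℕ) : (n:ℝ) ^ n ≤ 3 ^ n * (Nat.factorial n : ℝ) := by
  have h1 : (n:ℝ) ^ n / (Nat.factorial n : ℝ) ≤ Real.exp n := by
    refine le_trans ?_ (Real.sum_le_exp_of_nonneg (x := (n:ℝ)) (by positivity) (n+1))
    exact Finset.single_le_sum (f := fun i => (n:ℝ) ^ i / (Nat.factorial i : ℝ))
      (fun i _ => by positivity) (Finset.self_mem_range_succ n)
  have h2 : Real.exp n ≤ 3 ^ n := by
    rw [← Real.exp_one_rpow (n:ℝ), Real.rpow_natCast]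
    apply pow_le_pow_left₀ (Real.exp_pos 1).le
    linarith [Real.exp_one_lt_d9]
  have h3 : (0:ℝ) < (Nat.factorial n : ℝ) := by exact_mod_cast Nat.factorial_pos n
  rw [div_le_iff₀ h3] at h1
  calc (n:ℝ)^n ≤ Real.exp n * Nat.factorial n := h1
    _ ≤ 3^n * Nat.factorial n := by apply mul_le_mul_of_nonneg_right h2 h3.le

lemma basis_eq (s : Finset ℕ) (v : ℕ → ℝ) (j : ℕ) :
    Lagrange.basis s v j =
      C (∏ i ∈ s.erase j, (v j - v i))⁻¹ * ∏ i ∈ s.erase j, (X - C (v i)) := by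
  rw [Lagrange.basis]
  simp_rw [Lagrange.basisDivisor]
  rw [Finset.prod_mul_distrib, ← map_prod, Finset.prod_inv_distrib]

theorem stmt12 :
    ∃ c : ℝ, 0 < c ∧
      ∀ n : ℕ, 1 ≤ n → ∀ h : Polynomial ℝ, h ≠ 0 → h.natDegree ≤ n →
        ∀ α : ℝ, 0 < α →
          (volume {t : ℝ | t ∈ Set.Icc (1:ℝ) 2 ∧ |h.eval t| ≤ α}).toReal ≤
            c * (α / (Finset.range (n + 1)).sup' (by simp) (fun k => |h.coeff k|)) ^ ((1:ℝ)/n) := by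
  refine ⟨24, by norm_num, ?_⟩
  intro n hn h hh hdeg α hα
  have hnR : (0:ℝ) < n := by exact_mod_cast hn
  set B := (Finset.range (n + 1)).sup' (by simp) (fun k => |h.coeff k|) with hBdef
  have hBpos : 0 < B := by
    have hk : h.natDegree ∈ Finset.range (n+1) := Finset.mem_range.2 (Nat.lt_succ_of_le hdeg)
    calc (0:ℝ) < |h.coeff h.natDegree| := abs_pos.2 (Polynomial.leadingCoeff_ne_zero.2 hh)
      _ ≤ B := Finset.le_sup' (fun k => |h.coeff k|) hk
  set E := {t : ℝ | t ∈ Set.Icc (1:ℝ) 2 ∧ |h.eval t| ≤ α} with hEdef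
  have hE2 : E ⊆ Set.Icc (1:ℝ) 2 := fun t ht => ht.1
  have hEc : IsClosed E := by
    have he : E = Set.Icc (1:ℝ) 2 ∩ (fun t => |h.eval t|) ⁻¹' Set.Iic α := rfl
    rw [he]
    exact isClosed_Icc.inter (isClosed_Iic.preimage (h.continuous_aeval.abs))
  set d := (volume E).toReal with hddef
  rcases eq_or_lt_of_le (ENNReal.toReal_nonneg : (0:ℝ) ≤ d) with hd0 | hd
  · rw [hddef, ← hd0]
    exact mul_nonneg (by norm_num) (Real.rpow_nonneg (div_nonneg hα.le hBpos.le) _)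
  obtain ⟨x, hxE, hsp⟩ := pts E hEc hE2 n hn hd
  have hxIcc : ∀ j, j ≤ n → x j ∈ Set.Icc (1:ℝ) 2 := fun j hj => (hxE j hj).1
  have hxev : ∀ j, j ≤ n → |h.eval (x j)| ≤ α := fun j hj => (hxE j hj).2
  have hdn : 0 < d / n := div_pos hd hnR
  have hdist : ∀ i j, i ≤ n → j ≤ n → (d/n) * |(j:ℝ) - (i:ℝ)| ≤ |x j - x i| := by
    intro i j hi hj
    rcases le_total i j with hij | hij
    · have h1 := hsp i j hij hj
      have hji : (i:ℝ) ≤ j := by exact_mod_cast hij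
      have hge : (0:ℝ) ≤ x j - x i := le_trans (mul_nonneg (by linarith) hdn.le) h1
      rw [abs_of_nonneg hge, abs_of_nonneg (by linarith), mul_comm]
      exact h1
    · have h1 := hsp j i hij hi
      have hji : (j:ℝ) ≤ i := by exact_mod_cast hij
      have hge : (0:ℝ) ≤ x i - x j := le_trans (mul_nonneg (by linarith) hdn.le) h1
      rw [abs_sub_comm (x j), abs_of_nonneg hge, abs_sub_comm ((j:ℝ)), abs_of_nonneg (by linarith), mul_comm]
      exact h1
  have hinj : Set.InjOn x ↑(Finset.range (n+1)) := by
    intro i hi j hj hxy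
    by_contra hne
    have hi' : i ≤ n := by
      simpa [Nat.lt_succ_iff] using hi
    have hj' : j ≤ n := by
      simpa [Nat.lt_succ_iff] using hj
    have h1 : (d/n) * |(j:ℝ) - (i:ℝ)| ≤ 0 := by simpa [hxy] using hdist i j hi' hj'
    have h2 : (0:ℝ) < |(j:ℝ) - (i:ℝ)| := abs_pos.2 (sub_ne_zero.2 (by exact_mod_cast Ne.symm hne))
    nlinarith
  have hdegs : h.degree < (Finset.range (n+1)).card := by
    rw [Finset.card_range]
    exact (Polynomial.natDegree_lt_iff_degree_lt hh).1 (Nat.lt_succ_of_le hdeg)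
  have hinterp := Lagrange.eq_interpolate (v := x) hinj hdegs
  have hcoeff : ∀ k, h.coeff k =
      ∑ j ∈ Finset.range (n+1), h.eval (x j) * (Lagrange.basis (Finset.range (n+1)) x j).coeff k := by
    intro k
    conv_lhs => rw [hinterp]
    rw [Lagrange.interpolate_apply, Polynomial.finset_sum_coeff]
    exact Finset.sum_congr rfl fun j _ => Polynomial.coeff_C_mul _
  have hbound : ∀ k, k ≤ n → ∀ j, j ≤ n →
      |(Lagrange.basis (Finset.range (n+1)) x j).coeff k| ≤
        4^n * ((n:ℝ)/d)^n / ((Nat.factorial j : ℝ) * (Nat.factorial (n-j) : ℝ)) := by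
    intro k hk j hj
    have hjmem : j ∈ Finset.range (n+1) := Finset.mem_range.2 (Nat.lt_succ_of_le hj)
    have hcard : ((Finset.range (n+1)).erase j).card = n := by
      rw [Finset.card_erase_of_mem hjmem, Finset.card_range]
      omega
    have hfacpos : (0:ℝ) < (Nat.factorial j : ℝ) * (Nat.factorial (n-j) : ℝ) := by
      have := Nat.factorial_pos j
      have := Nat.factorial_pos (n-j)
      positivity
    have hD : (d/n)^n * ((Nat.factorial j : ℝ) * (Nat.factorial (n-j) : ℝ)) ≤
        ∏ i ∈ (Finset.range (n+1)).erase j, |x j - x i| := by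
      calc (d/n)^n * ((Nat.factorial j : ℝ) * (Nat.factorial (n-j) : ℝ))
          = ∏ i ∈ (Finset.range (n+1)).erase j, ((d/n) * |(j:ℝ) - (i:ℝ)|) := by
            rw [Finset.prod_mul_distrib, Finset.prod_const, hcard, prodfact n j hj]
        _ ≤ _ := by
            apply Finset.prod_le_prod (fun i _ => by positivity)
            intro i hi
            have hi' : i ≤ n := by
              have := Finset.mem_range.1 (Finset.mem_of_mem_erase hi)
              omega
            exact hdist i j hi' hj
    have hDpos : 0 < ∏ i ∈ (Finset.range (n+1)).erase j, |x j - x i| :=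
      lt_of_lt_of_le (by positivity) hD
    have hnum : |(∏ i ∈ (Finset.range (n+1)).erase j, (X - C (x i))).coeff k| ≤ 4^n := by
      have hv : ∀ i ∈ (Finset.range (n+1)).erase j, |x i| ≤ 2 := by
        intro i hi
        have hi' : i ≤ n := by
          have := Finset.mem_range.1 (Finset.mem_of_mem_erase hi)
          omega
        have := hxIcc i hi'
        rw [Set.mem_Icc] at this
        rw [abs_le]
        constructor <;> linarith [this.1, this.2]
      calc |(∏ i ∈ (Finset.range (n+1)).erase j, (X - C (x i))).coeff k|
          ≤ ((((Finset.range (n+1)).erase j).card).choose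
              (((Finset.range (n+1)).erase j).card - k) : ℝ) *
              2 ^ (((Finset.range (n+1)).erase j).card - k) :=
            coeff_prod_bound _ x hv k (by rw [hcard]; exact hk)
        _ ≤ 2^n * 2^n := by
            rw [hcard]
            apply mul_le_mul (choose_le n (n-k)) _ (by positivity) (by positivity)
            apply pow_le_pow_right₀ (by norm_num)
            omega
        _ = 4^n := by rw [← mul_pow]; norm_num
    rw [basis_eq, Polynomial.coeff_C_mul, abs_mul, abs_inv, Finset.abs_prod]
    calc (∏ i ∈ (Finset.range (n+1)).erase j, |x j - x i|)⁻¹ *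
          |(∏ i ∈ (Finset.range (n+1)).erase j, (X - C (x i))).coeff k|
        ≤ ((d/n)^n * ((Nat.factorial j : ℝ) * (Nat.factorial (n-j) : ℝ)))⁻¹ * 4^n := by
          apply mul_le_mul _ hnum (abs_nonneg _) (by positivity)
          exact inv_anti₀ (by positivity) hD
      _ = 4^n * ((n:ℝ)/d)^n / ((Nat.factorial j : ℝ) * (Nat.factorial (n-j) : ℝ)) := by
          rw [div_pow, div_pow, mul_inv]
          field_simp
  obtain ⟨k₀, hk₀mem, hk₀⟩ := Finset.exists_mem_eq_sup' (by simp : (Finset.range (n+1)).Nonempty)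
    (fun k => |h.coeff k|)
  have hk₀n : k₀ ≤ n := Nat.lt_succ_iff.1 (Finset.mem_range.1 hk₀mem)
  have hsum : ∑ j ∈ Finset.range (n+1),
      (1:ℝ)/((Nat.factorial j : ℝ) * (Nat.factorial (n-j) : ℝ)) = 2^n / (Nat.factorial n : ℝ) := by
    have hterm : ∀ j ∈ Finset.range (n+1),
        (1:ℝ)/((Nat.factorial j : ℝ) * (Nat.factorial (n-j) : ℝ)) =
          (n.choose j : ℝ) / (Nat.factorial n : ℝ) := by
      intro j hj
      have hj' : j ≤ n := Nat.lt_succ_iff.1 (Finset.mem_range.1 hj)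
      have hcc := Nat.choose_mul_factorial_mul_factorial hj'
      have h1 : (0:ℝ) < (Nat.factorial j : ℝ) * (Nat.factorial (n-j) : ℝ) := by
        have := Nat.factorial_pos j
        have := Nat.factorial_pos (n-j)
        positivity
      have h2 : (0:ℝ) < (Nat.factorial n : ℝ) := by exact_mod_cast Nat.factorial_pos n
      rw [div_eq_div_iff h1.ne' h2.ne', one_mul]
      norm_cast
      rw [← hcc]; ring
    rw [Finset.sum_congr rfl hterm, ← Finset.sum_div]
    congr 1
    exact_mod_cast Nat.sum_range_choose n
  have hBle : B ≤ α * (4^n * ((n:ℝ)/d)^n) * (2^n / (Nat.factorial n : ℝ)) := by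
    rw [hBdef, hk₀]
    calc |h.coeff k₀|
        ≤ ∑ j ∈ Finset.range (n+1),
            α * (4^n * ((n:ℝ)/d)^n / ((Nat.factorial j : ℝ) * (Nat.factorial (n-j) : ℝ))) := by
          rw [hcoeff k₀]
          refine le_trans (Finset.abs_sum_le_sum_abs _ _) (Finset.sum_le_sum ?_)
          intro j hj
          have hj' : j ≤ n := Nat.lt_succ_iff.1 (Finset.mem_range.1 hj)
          rw [abs_mul]
          exact mul_le_mul (hxev j hj') (hbound k₀ hk₀n j hj') (abs_nonneg _) hα.le
      _ = α * (4^n * ((n:ℝ)/d)^n) *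
            ∑ j ∈ Finset.range (n+1), (1:ℝ)/((Nat.factorial j : ℝ) * (Nat.factorial (n-j) : ℝ)) := by
          rw [Finset.mul_sum]
          exact Finset.sum_congr rfl fun j _ => by ring
      _ = α * (4^n * ((n:ℝ)/d)^n) * (2^n / (Nat.factorial n : ℝ)) := by rw [hsum]
  have hd' : 0 < d := hd
  have hfacpos' : (0:ℝ) < (Nat.factorial n : ℝ) := by exact_mod_cast Nat.factorial_pos n
  have hdpow : (0:ℝ) < d ^ n := by positivity
  have hfinal : B * d ^ n ≤ α * 24 ^ n := by
    have h1 : B * d^n ≤ (α * (4^n * ((n:ℝ)/d)^n) * (2^n / (Nat.factorial n : ℝ))) * d^n :=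
      mul_le_mul_of_nonneg_right hBle hdpow.le
    have heq : (α * (4^n * ((n:ℝ)/d)^n) * (2^n / (Nat.factorial n : ℝ))) * d^n
        = α * 8^n * ((n:ℝ)^n / (Nat.factorial n : ℝ)) := by
      rw [div_pow, show (8:ℝ)^n = 2^n*4^n by rw [← mul_pow]; norm_num]
      field_simp
    have h2 : ((n:ℝ)^n / (Nat.factorial n : ℝ)) ≤ 3^n := by
      rw [div_le_iff₀ hfacpos']
      exact pow_self_le n
    calc B * d^n ≤ α * 8^n * ((n:ℝ)^n / (Nat.factorial n:ℝ)) := by rw [← heq]; exact h1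
      _ ≤ α * 8^n * 3^n := mul_le_mul_of_nonneg_left h2 (by positivity)
      _ = α * 24^n := by rw [mul_assoc, ← mul_pow]; norm_num
  have hdn_le : d ^ n ≤ 24 ^ n * (α / B) := by
    rw [mul_div_assoc', le_div_iff₀ hBpos]
    calc d^n * B = B * d^n := mul_comm _ _
      _ ≤ α * 24^n := hfinal
      _ = 24^n * α := mul_comm _ _
  calc d = d ^ ((n:ℝ) * ((1:ℝ)/n)) := by
        rw [mul_one_div, div_self hnR.ne', Real.rpow_one]
    _ = (d ^ (n:ℝ)) ^ ((1:ℝ)/n) := Real.rpow_mul hd'.le _ _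
    _ = (d ^ n) ^ ((1:ℝ)/n) := by rw [Real.rpow_natCast]
    _ ≤ (24^n * (α/B)) ^ ((1:ℝ)/n) := Real.rpow_le_rpow (by positivity) hdn_le (by positivity)
    _ = 24 * (α/B) ^ ((1:ℝ)/n) := by
        rw [Real.mul_rpow (by positivity) (div_nonneg hα.le hBpos.le),
          ← Real.rpow_natCast (24:ℝ) n, ← Real.rpow_mul (by norm_num : (0:ℝ) ≤ 24),
          mul_one_div, div_self hnR.ne', Real.rpow_one]
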